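/- Let f be L-smooth, let D_k be a finite set of nonzero directions with norms in [d_min, d_max] whose cosine measure satisfies cm(D_k) ≥ τ > 0, and suppose f(x_k + α_k d) ≥ f(x_k) - ρ(α_k) for all d ∈ D_k with α_k > 0. Then ‖∇f(x_k)‖ ≤ (1/τ)·(α_k·L·d_max/2 + ρ(α_k)/(α_k·d_min)). -/

import Mathlib

local notation "⟪" x ", " y "⟫" => @inner ℝ _ _ x y

/-- The cosine measure of a finite set of directions:
`cm(D) = inf_{v ≠ 0} sup_{d ∈ D} ⟪d, v⟫ / (‖d‖ ‖v‖)`. -/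
noncomputable def cosMeasure {n : ℕ} (D : Finset (EuclideanSpace ℝ (Fin n))) : ℝ :=
  ⨅ v : {v : EuclideanSpace ℝ (Fin n) // v ≠ 0},
    ⨆ d : D, ⟪(d : EuclideanSpace ℝ (Fin n)), (v : EuclideanSpace ℝ (Fin n))⟫ /
      (‖(d : EuclideanSpace ℝ (Fin n))‖ * ‖(v : EuclideanSpace ℝ (Fin n))‖)



lemma descent {n : ℕ} (f : EuclideanSpace ℝ (Fin n) → ℝ)
    (g : EuclideanSpace ℝ (Fin n) → EuclideanSpace ℝ (Fin n))
    (L : ℝ) (hL : 0 ≤ L)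
    (hgrad : ∀ y, HasGradientAt f (g y) y)
    (hlip : ∀ y z, ‖g y - g z‖ ≤ L * ‖y - z‖)
    (x u : EuclideanSpace ℝ (Fin n)) :
    f (x + u) ≤ f x + ⟪g x, u⟫ + L / 2 * ‖u‖ ^ 2 := by
  have hgc : Continuous g := by
    refine (LipschitzWith.of_dist_le_mul (K := ⟨L, hL⟩) ?_).continuous
    intro y z
    rw [dist_eq_norm, dist_eq_norm]; exact hlip y z
  have hcurve : ∀ t : ℝ, HasDerivAt (fun s : ℝ => x + s • u) u t := by
    intro t
    simpa using ((hasDerivAt_id t).smul_const u).const_add x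
  have hφ : ∀ t : ℝ, HasDerivAt (fun s : ℝ => f (x + s • u)) ⟪g (x + t • u), u⟫ t := by
    intro t
    have := ((hgrad (x + t • u)).hasFDerivAt).comp_hasDerivAt t (hcurve t)
    simp [InnerProductSpace.toDual_apply_apply] at this; exact this
  have hcont : Continuous fun t : ℝ => ⟪g (x + t • u), u⟫ := by
    exact (hgc.comp (by continuity)).inner continuous_const
  have hFTC : f (x + u) - f x = ∫ t in (0:ℝ)..1, ⟪g (x + t • u), u⟫ := by
    have := intervalIntegral.integral_eq_sub_of_hasDerivAt
      (f := fun s : ℝ => f (x + s • u)) (f' := fun t => ⟪g (x + t • u), u⟫)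
      (a := 0) (b := 1) (fun t _ => hφ t)
      (hcont.intervalIntegrable 0 1)
    simp only [one_smul, zero_smul, add_zero] at this
    exact this.symm
  have hbound : ∀ t ∈ Set.Icc (0:ℝ) 1,
      ⟪g (x + t • u), u⟫ ≤ ⟪g x, u⟫ + L * t * ‖u‖ ^ 2 := by
    intro t ht
    have h1 : ⟪g (x + t • u) - g x, u⟫ ≤ ‖g (x + t • u) - g x‖ * ‖u‖ :=
      real_inner_le_norm _ _
    have h2 : ‖g (x + t • u) - g x‖ ≤ L * (t * ‖u‖) := by
      have := hlip (x + t • u) x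
      simpa [norm_smul, abs_of_nonneg ht.1, mul_assoc] using this
    have h3 : ⟪g (x + t • u) - g x, u⟫ ≤ L * t * ‖u‖ ^ 2 := by
      calc ⟪g (x + t • u) - g x, u⟫ ≤ ‖g (x + t • u) - g x‖ * ‖u‖ := h1
        _ ≤ L * (t * ‖u‖) * ‖u‖ := by
            exact mul_le_mul_of_nonneg_right h2 (norm_nonneg _)
        _ = L * t * ‖u‖ ^ 2 := by ring
    have := inner_sub_left (𝕜 := ℝ) (g (x + t • u)) (g x) u
    linarith [h3, this.symm ▸ h3]
  have hint : (∫ t in (0:ℝ)..1, ⟪g (x + t • u), u⟫)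
      ≤ ∫ t in (0:ℝ)..1, (⟪g x, u⟫ + L * t * ‖u‖ ^ 2) := by
    apply intervalIntegral.integral_mono_on (by norm_num)
      (hcont.intervalIntegrable 0 1)
      ((continuous_const.add ((continuous_const.mul continuous_id).mul
        continuous_const)).intervalIntegrable 0 1)
    exact hbound
  have hval : (∫ t in (0:ℝ)..1, (⟪g x, u⟫ + L * t * ‖u‖ ^ 2)) = ⟪g x, u⟫ + L / 2 * ‖u‖ ^ 2 := by
    have heq : (fun t : ℝ => ⟪g x, u⟫ + L * t * ‖u‖ ^ 2)
        = fun t : ℝ => ⟪g x, u⟫ + t * (L * ‖u‖ ^ 2) := by ext t; ring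
    rw [intervalIntegral.integral_congr (g := fun t : ℝ => ⟪g x, u⟫ + t * (L * ‖u‖ ^ 2))
      (fun t _ => by ring),
      intervalIntegral.integral_add (continuous_const.intervalIntegrable 0 1)
        (Continuous.intervalIntegrable (by fun_prop) 0 1 :
          IntervalIntegrable (fun t : ℝ => t * (L * ‖u‖ ^ 2)) MeasureTheory.volume 0 1),
      intervalIntegral.integral_mul_const, integral_id,
      intervalIntegral.integral_const]
    norm_num
    ring
  linarith [hFTC, hint, hval.symm ▸ hint]

theorem stmt1' {n : ℕ} (f : EuclideanSpace ℝ (Fin n) → ℝ)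
    (g : EuclideanSpace ℝ (Fin n) → EuclideanSpace ℝ (Fin n))
    (L : ℝ) (hL : 0 ≤ L)
    (hgrad : ∀ y, HasGradientAt f (g y) y)
    (hlip : ∀ y z, ‖g y - g z‖ ≤ L * ‖y - z‖)
    (x : EuclideanSpace ℝ (Fin n)) (α : ℝ) (hα : 0 < α)
    (D : Finset (EuclideanSpace ℝ (Fin n)))
    (dmin dmax : ℝ) (hdmin : 0 < dmin)
    (hnorm : ∀ d ∈ D, dmin ≤ ‖d‖ ∧ ‖d‖ ≤ dmax)
    (hD0 : ∀ d ∈ D, d ≠ 0)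
    (τ : ℝ) (hτ : 0 < τ)
    (hcm : τ ≤ ⨅ v : {v : EuclideanSpace ℝ (Fin n) // v ≠ 0},
      ⨆ d : D, ⟪(d : EuclideanSpace ℝ (Fin n)), (v : EuclideanSpace ℝ (Fin n))⟫ /
        (‖(d : EuclideanSpace ℝ (Fin n))‖ * ‖(v : EuclideanSpace ℝ (Fin n))‖))
    (ρ : ℝ → ℝ) (hρ : ∀ a, 0 ≤ ρ a)
    (hfail : ∀ d ∈ D, f x - ρ α ≤ f (x + α • d)) :
    ‖g x‖ ≤ (1 / τ) * (α * L * dmax / 2 + ρ α / (α * dmin)) := by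
  set F := fun v : {v : EuclideanSpace ℝ (Fin n) // v ≠ 0} =>
    ⨆ d : D, ⟪(d : EuclideanSpace ℝ (Fin n)), (v : EuclideanSpace ℝ (Fin n))⟫ /
      (‖(d : EuclideanSpace ℝ (Fin n))‖ * ‖(v : EuclideanSpace ℝ (Fin n))‖) with hF
  -- D is nonempty
  have hDne : D.Nonempty := by
    by_contra h
    rw [Finset.not_nonempty_iff_eq_empty] at h
    subst h
    have hE : ∀ v, F v = 0 := by
      intro v
      have hie : IsEmpty {d // d ∈ (∅ : Finset (EuclideanSpace ℝ (Fin n)))} :=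
        ⟨fun d => (Finset.notMem_empty _ d.2)⟩
      simp only [hF]
      rw [iSup_of_empty']
      exact Real.sSup_empty
    have : (⨅ v, F v) = 0 := by
      rcases isEmpty_or_nonempty {v : EuclideanSpace ℝ (Fin n) // v ≠ 0} with hi | hi
      · rw [iInf_of_isEmpty]; exact Real.sInf_empty
      · simp [hE]
    linarith [hcm, this]
  obtain ⟨d₀, hd₀⟩ := hDne
  have hDne' : Nonempty D := ⟨⟨d₀, hd₀⟩⟩
  have hdmax : 0 < dmax := lt_of_lt_of_le hdmin
    (le_trans (hnorm d₀ hd₀).1 (hnorm d₀ hd₀).2)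
  -- ratios are ≥ -1
  have hratio_lb : ∀ (d : EuclideanSpace ℝ (Fin n)), d ∈ D → ∀ v : EuclideanSpace ℝ (Fin n),
      v ≠ 0 → -1 ≤ ⟪d, v⟫ / (‖d‖ * ‖v‖) := by
    intro d hd v hv
    have hpos : 0 < ‖d‖ * ‖v‖ :=
      mul_pos (norm_pos_iff.2 (hD0 d hd)) (norm_pos_iff.2 hv)
    rw [le_div_iff₀ hpos]
    have := abs_real_inner_le_norm d v
    have h2 := neg_abs_le ⟪d, v⟫
    linarith
  have hbddA : ∀ v : {v : EuclideanSpace ℝ (Fin n) // v ≠ 0},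
      BddAbove (Set.range fun d : D =>
        ⟪(d : EuclideanSpace ℝ (Fin n)), (v : EuclideanSpace ℝ (Fin n))⟫ /
          (‖(d : EuclideanSpace ℝ (Fin n))‖ * ‖(v : EuclideanSpace ℝ (Fin n))‖)) :=
    fun v => Set.Finite.bddAbove (Set.finite_range _)
  have hbddB : BddBelow (Set.range F) := by
    refine ⟨-1, ?_⟩
    rintro _ ⟨v, rfl⟩
    calc (-1 : ℝ) ≤ ⟪(d₀ : EuclideanSpace ℝ (Fin n)), (v : EuclideanSpace ℝ (Fin n))⟫ /
          (‖d₀‖ * ‖(v : EuclideanSpace ℝ (Fin n))‖) := hratio_lb d₀ hd₀ v v.2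
      _ ≤ F v := le_ciSup (hbddA v) ⟨d₀, hd₀⟩
  by_cases hg : g x = 0
  · rw [hg, norm_zero]
    have h1 : 0 ≤ α * L * dmax / 2 :=
      div_nonneg (mul_nonneg (mul_nonneg hα.le hL) hdmax.le) (by norm_num)
    have h2 : 0 ≤ ρ α / (α * dmin) := div_nonneg (hρ α) (by positivity)
    have h3 : 0 ≤ 1 / τ := by positivity
    exact mul_nonneg h3 (by linarith)
  -- main case
  have hGpos : 0 < ‖g x‖ := norm_pos_iff.2 hg
  set v₀ : {v : EuclideanSpace ℝ (Fin n) // v ≠ 0} := ⟨-g x, by simpa using hg⟩ with hv₀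
  have hτF : τ ≤ F v₀ := le_trans hcm (ciInf_le hbddB v₀)
  obtain ⟨dm, hdm⟩ := Finite.exists_max (fun d : D =>
    ⟪(d : EuclideanSpace ℝ (Fin n)), (v₀ : EuclideanSpace ℝ (Fin n))⟫ /
      (‖(d : EuclideanSpace ℝ (Fin n))‖ * ‖(v₀ : EuclideanSpace ℝ (Fin n))‖))
  have hFle : F v₀ ≤ ⟪(dm : EuclideanSpace ℝ (Fin n)), (v₀ : EuclideanSpace ℝ (Fin n))⟫ /
      (‖(dm : EuclideanSpace ℝ (Fin n))‖ * ‖(v₀ : EuclideanSpace ℝ (Fin n))‖) :=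
    ciSup_le hdm
  set d : EuclideanSpace ℝ (Fin n) := (dm : EuclideanSpace ℝ (Fin n)) with hd
  have hdD : d ∈ D := dm.2
  have hdne : d ≠ 0 := hD0 d hdD
  have hs : 0 < ‖d‖ := norm_pos_iff.2 hdne
  have hv0 : (v₀ : EuclideanSpace ℝ (Fin n)) = -g x := rfl
  have hnv : ‖(v₀ : EuclideanSpace ℝ (Fin n))‖ = ‖g x‖ := by rw [hv0, norm_neg]
  have hiv : ⟪d, (v₀ : EuclideanSpace ℝ (Fin n))⟫ = -⟪g x, d⟫ := by
    rw [hv0, inner_neg_right, real_inner_comm]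
  have hτr : τ ≤ (-⟪g x, d⟫) / (‖d‖ * ‖g x‖) := by
    calc τ ≤ F v₀ := hτF
      _ ≤ _ := hFle
      _ = _ := by rw [hiv, hnv]
  have h1 : τ * (‖d‖ * ‖g x‖) ≤ -⟪g x, d⟫ :=
    (le_div_iff₀ (mul_pos hs hGpos)).1 hτr
  -- descent + failure
  have hdes := descent f g L hL hgrad hlip x (α • d)
  have hfa := hfail d hdD
  have hnormsq : ‖α • d‖ ^ 2 = α ^ 2 * ‖d‖ ^ 2 := by
    rw [norm_smul, mul_pow, Real.norm_eq_abs, sq_abs]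
  have hinn : ⟪g x, α • d⟫ = α * ⟪g x, d⟫ := real_inner_smul_right _ _ _
  have h2 : -α * ⟪g x, d⟫ ≤ ρ α + L / 2 * (α ^ 2 * ‖d‖ ^ 2) := by
    have := hdes
    rw [hinn, hnormsq] at this
    linarith
  -- combine
  have hdlo := (hnorm d hdD).1
  have hdhi := (hnorm d hdD).2
  set Q := ρ α / (α * dmin) with hQ
  have hQ0 : 0 ≤ Q := div_nonneg (hρ α) (by positivity)
  have hQe : Q * (α * dmin) = ρ α := by
    rw [hQ]; exact div_mul_cancel₀ _ (by positivity)
  have key : τ * ‖g x‖ * (α * ‖d‖) ≤ (α * L * dmax / 2 + Q) * (α * ‖d‖) := by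
    nlinarith [mul_le_mul_of_nonneg_left hdlo hQ0, mul_pos hα hs, hρ α,
      mul_le_mul_of_nonneg_left hdhi (mul_nonneg (mul_nonneg hL (le_of_lt hα)) hs.le),
      mul_le_mul_of_nonneg_left h1 hα.le]
  have key2 : τ * ‖g x‖ ≤ α * L * dmax / 2 + Q :=
    le_of_mul_le_mul_right key (mul_pos hα hs)
  rw [div_mul_eq_mul_div, one_mul, le_div_iff₀ hτ]
  linarith [key2]

/-- gradient-norm bound at an unsuccessful iteration of direct search,
when the poll set has cosine measure at least `τ > 0` and direction norms in `[dmin, dmax]`. -/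
theorem stmt1 {n : ℕ} (f : EuclideanSpace ℝ (Fin n) → ℝ)
    (g : EuclideanSpace ℝ (Fin n) → EuclideanSpace ℝ (Fin n))
    (L : ℝ) (hL : 0 ≤ L)
    (hgrad : ∀ y, HasGradientAt f (g y) y)
    (hlip : ∀ y z, ‖g y - g z‖ ≤ L * ‖y - z‖)
    (x : EuclideanSpace ℝ (Fin n)) (α : ℝ) (hα : 0 < α)
    (D : Finset (EuclideanSpace ℝ (Fin n)))
    (dmin dmax : ℝ) (hdmin : 0 < dmin)
    (hnorm : ∀ d ∈ D, dmin ≤ ‖d‖ ∧ ‖d‖ ≤ dmax)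
    (hD0 : ∀ d ∈ D, d ≠ 0)
    (τ : ℝ) (hτ : 0 < τ) (hcm : τ ≤ cosMeasure D)
    (ρ : ℝ → ℝ) (hρ : ∀ a, 0 ≤ ρ a)
    (hfail : ∀ d ∈ D, f x - ρ α ≤ f (x + α • d)) :
    ‖g x‖ ≤ (1 / τ) * (α * L * dmax / 2 + ρ α / (α * dmin)) := by
  exact stmt1' f g L hL hgrad hlip x α hα D dmin dmax hdmin hnorm hD0 τ hτ hcm ρ hρ hfail
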